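/- Let d ≥ 4(δ - 1) and δ ≥ 2, and set θ_1 = 2π/d. Then (2δ - 1) - (1 + 2∑_{k=1}^{δ-1} cos(kθ_1)) ≥ (π^2/3)(δ^3/d^2). -/

import Mathlib

open Real

lemma aux_one_sub_cos (x : ℝ) (hx0 : 0 < x) (hx : x ≤ π / 2) :
    (1 - π ^ 2 / 32) * x ^ 2 / 2 ≤ 1 - Real.cos x := by
  have hπ4 : π < 4 := Real.pi_lt_four
  have hπ0 : 0 < π := Real.pi_pos
  have ht0 : 0 < x / 2 := by linarith
  have ht1 : x / 2 ≤ 1 := by nlinarith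
  have hs : x / 2 - (x / 2) ^ 3 / 4 < Real.sin (x / 2) := by
    have h := Real.sin_gt_sub_cube ht0
    linarith [pow_pos ht0 3]
  have hsq : Real.sin (x / 2) ^ 2 = 1 / 2 - Real.cos x / 2 := by
    have := Real.sin_sq_eq_half_sub (x / 2)
    rw [this]
    ring_nf
  have h3 : (x / 2) ^ 3 ≤ x / 2 := by
    calc (x / 2) ^ 3 = (x / 2) * (x / 2) ^ 2 := by ring
      _ ≤ (x / 2) * 1 := by
          apply mul_le_mul_of_nonneg_left _ ht0.le
          nlinarith
      _ = x / 2 := by ring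
  have hpos : 0 ≤ x / 2 - (x / 2) ^ 3 / 4 := by linarith
  have h2 : (x / 2 - (x / 2) ^ 3 / 4) ^ 2 ≤ Real.sin (x / 2) ^ 2 := by
    have := hs.le
    nlinarith
  rw [hsq] at h2
  have hx2 : x ^ 2 ≤ π ^ 2 / 4 := by nlinarith
  nlinarith [mul_nonneg (sq_nonneg x) (by linarith : (0:ℝ) ≤ π ^ 2 / 4 - x ^ 2),
    sq_nonneg (x ^ 3)]

lemma aux_sum_sq (m : ℕ) :
    ∑ k ∈ Finset.Icc 1 m, (k : ℝ) ^ 2 = m * (m + 1) * (2 * m + 1) / 6 := by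
  induction m with
  | zero => simp
  | succ n ih =>
    rw [Finset.sum_Icc_succ_top (by omega)]
    rw [ih]
    push_cast
    ring

set_option maxHeartbeats 1000000 in
theorem stmt_6 (d δ : ℕ) (hδ : 2 ≤ δ) (hd : 4 * (δ - 1) ≤ d) :
    (π^2 / 3) * ((δ:ℝ)^3 / (d:ℝ)^2) ≤
      (2 * (δ:ℝ) - 1) - (1 + 2 * ∑ k ∈ Finset.Icc 1 (δ - 1), Real.cos (k * (2 * π / d))) := by
  have hπ0 : 0 < π := Real.pi_pos
  have hπ2 : π < 3.15 := Real.pi_lt_d2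
  have hπ3 : 3 < π := by
    have := Real.pi_gt_d6
    linarith
  have hm1 : 1 ≤ δ - 1 := by omega
  have hd0 : 0 < d := by omega
  set m := δ - 1 with hmdef
  have hmδ : (m : ℝ) = (δ : ℝ) - 1 := by
    have h : m + 1 = δ := by omega
    have := congrArg (fun n : ℕ => (n : ℝ)) h
    push_cast at this
    linarith
  have hdm : (4 : ℝ) * m ≤ d := by exact_mod_cast hd
  have hdR : (0 : ℝ) < d := by exact_mod_cast hd0
  have hmR : (1 : ℝ) ≤ m := by exact_mod_cast hm1
  -- pointwise bound
  have hterm : ∀ k ∈ Finset.Icc 1 m,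
      (1 - π ^ 2 / 32) * ((k : ℝ) * (2 * π / d)) ^ 2 / 2
        ≤ 1 - Real.cos ((k : ℝ) * (2 * π / d)) := by
    intro k hk
    simp only [Finset.mem_Icc] at hk
    have hk1 : (1 : ℝ) ≤ k := by exact_mod_cast hk.1
    have hkm : (k : ℝ) ≤ m := by exact_mod_cast hk.2
    apply aux_one_sub_cos
    · positivity
    · have e : (k : ℝ) * (2 * π / d) = 2 * π * k / d := by ring
      rw [e, div_le_div_iff₀ hdR (by norm_num : (0:ℝ) < 2)]
      nlinarith [mul_le_mul_of_nonneg_left hkm hπ0.le,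
        mul_le_mul_of_nonneg_left hdm hπ0.le]
  have hsum := Finset.sum_le_sum hterm
  have hrw : ∑ k ∈ Finset.Icc 1 m, (1 - Real.cos ((k : ℝ) * (2 * π / d)))
      = (m : ℝ) - ∑ k ∈ Finset.Icc 1 m, Real.cos ((k : ℝ) * (2 * π / d)) := by
    rw [Finset.sum_sub_distrib]
    congr 1
    rw [Finset.sum_const, Nat.card_Icc]
    simp
  have hlhs : ∑ k ∈ Finset.Icc 1 m, (1 - π ^ 2 / 32) * ((k : ℝ) * (2 * π / d)) ^ 2 / 2
      = (1 - π ^ 2 / 32) * (2 * π / d) ^ 2 / 2 * ((m : ℝ) * (m + 1) * (2 * m + 1) / 6) := by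
    rw [show ((m : ℝ) * (m + 1) * (2 * m + 1) / 6)
        = ∑ k ∈ Finset.Icc 1 m, (k : ℝ) ^ 2 from (aux_sum_sq m).symm, Finset.mul_sum]
    apply Finset.sum_congr rfl
    intro k _
    ring
  rw [hrw, hlhs] at hsum
  -- final arithmetic
  have hπsq : π ^ 2 < 9.9225 := by nlinarith
  have hP0 : (0:ℝ) ≤ (m : ℝ) * (m + 1) * (2 * m + 1) := by positivity
  have hR' : ((m:ℝ) + 1) ^ 3 ≤ (2 - 9.9225 / 16) * ((m : ℝ) * (m + 1) * (2 * m + 1)) := by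
    nlinarith [sq_nonneg ((m:ℝ) - 1), mul_nonneg (by linarith : (0:ℝ) ≤ (m:ℝ) - 1)
      (by linarith : (0:ℝ) ≤ (m:ℝ) + 1), sq_nonneg ((m:ℝ) + 1)]
  have hA : π ^ 2 * π ^ 2 * ((m : ℝ) * (m + 1) * (2 * m + 1)) ≤ 9.9225 * π ^ 2 * ((m : ℝ) * (m + 1) * (2 * m + 1)) := by
    apply mul_le_mul_of_nonneg_right _ hP0
    nlinarith
  have hB : π ^ 2 * ((m:ℝ) + 1) ^ 3 ≤ π ^ 2 * ((2 - 9.9225 / 16) * ((m : ℝ) * (m + 1) * (2 * m + 1))) :=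
    mul_le_mul_of_nonneg_left hR' (sq_nonneg π)
  have hkey : (π ^ 2 / 3) * ((δ : ℝ) ^ 3 / (d : ℝ) ^ 2)
      ≤ 2 * ((1 - π ^ 2 / 32) * (2 * π / d) ^ 2 / 2 * ((m : ℝ) * (m + 1) * (2 * m + 1) / 6)) := by
    have e1 : (π ^ 2 / 3) * ((δ : ℝ) ^ 3 / (d : ℝ) ^ 2)
        = (π ^ 2 / 3 * ((m:ℝ) + 1) ^ 3) / (d : ℝ) ^ 2 := by
      rw [show ((δ:ℝ)) = (m:ℝ) + 1 by linarith]
      ring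
    have e2 : 2 * ((1 - π ^ 2 / 32) * (2 * π / d) ^ 2 / 2 * ((m : ℝ) * (m + 1) * (2 * m + 1) / 6))
        = ((1 - π ^ 2 / 32) * (4 * π ^ 2) * ((m : ℝ) * (m + 1) * (2 * m + 1)) / 6) / (d : ℝ) ^ 2 := by
      field_simp
      ring
    rw [e1, e2]
    have hd2 : (0:ℝ) < (d:ℝ) ^ 2 := by positivity
    rw [div_le_div_iff_of_pos_right hd2]
    linarith [hA, hB]
  calc (π ^ 2 / 3) * ((δ : ℝ) ^ 3 / (d : ℝ) ^ 2)
      ≤ 2 * ((1 - π ^ 2 / 32) * (2 * π / d) ^ 2 / 2 * ((m : ℝ) * (m + 1) * (2 * m + 1) / 6)) :=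
        hkey
    _ ≤ 2 * ((m : ℝ) - ∑ k ∈ Finset.Icc 1 m, Real.cos ((k : ℝ) * (2 * π / d))) := by
        linarith
    _ = (2 * (δ : ℝ) - 1) - (1 + 2 * ∑ k ∈ Finset.Icc 1 m, Real.cos ((k : ℝ) * (2 * π / d))) := by
        rw [hmδ]; ring
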